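/- Let A be a unital C*-algebra and u, v ∈ A isometries with u·v = λ·v·u for some λ ∈ ℂ with |λ| = 1. Define ū := u(1 − vv*) + (1 − uu*)v*. Then ū·ū* = ū*·ū = 1 − u·v·v*·u*. -/

import Mathlib

/-- For isometries `u, v` with `uv = λ•vu`, `ū := u(1-vv*) + (1-uu*)v*` satisfies
`ū ū* = ū* ū = 1 - uvv*u*`. -/
theorem stmt_2 {A : Type*} [NormedRing A] [StarRing A] [CStarRing A]
    [NormedAlgebra ℂ A] [StarModule ℂ A] [CompleteSpace A]
    (u v : A) (hu : star u * u = 1) (hv : star v * v = 1)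
    (l : ℂ) (hl : ‖l‖ = 1) (huv : u * v = l • (v * u)) :
    (u * (1 - v * star v) + (1 - u * star u) * star v) *
        star (u * (1 - v * star v) + (1 - u * star u) * star v)
      = 1 - u * v * star v * star u ∧
    star (u * (1 - v * star v) + (1 - u * star u) * star v) *
        (u * (1 - v * star v) + (1 - u * star u) * star v)
      = 1 - u * v * star v * star u := by
  have hu' : ∀ x : A, star u * (u * x) = x := fun x => by rw [← mul_assoc, hu, one_mul]
  have hv' : ∀ x : A, star v * (v * x) = x := fun x => by rw [← mul_assoc, hv, one_mul]
  have hl2 : l * (starRingEnd ℂ) l = 1 := by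
    rw [Complex.mul_conj]
    norm_cast
    simp [Complex.normSq_eq_norm_sq, hl]
  have key : u * (v * (star v * star u)) = v * (u * (star u * star v)) := by
    have h1 : u * (v * (star v * star u)) = (u*v) * star (u*v) := by
      rw [star_mul]; noncomm_ring
    have h2 : v * (u * (star u * star v)) = (v*u) * star (v*u) := by
      rw [star_mul]; noncomm_ring
    rw [h1, h2, huv, star_smul, smul_mul_smul_comm]
    simp [hl2]
  constructor <;>
  · simp only [star_add, star_mul, star_sub, star_one, star_star, mul_add, add_mul,
      mul_sub, sub_mul, mul_one, one_mul, mul_assoc, hu', hv', hu, hv, key]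
    abel
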